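/- lim_{N→∞} ( N - Σ_{k=0}^{N-1} P(2k+2, 2N) ) / √N = 1/(2√π). (This gives the expected number of eigenvalues of the symplectic Ginibre ensemble lying outside the limiting support, to leading order √N/(2√π).) -/

import Mathlib

open MeasureTheory Real Filter

/-- The lower incomplete gamma function `γ(n,x) = ∫₀^x t^(n-1) e^(-t) dt`. -/
noncomputable def lowGamma (n x : ℝ) : ℝ := ∫ t in (0:ℝ)..x, t ^ (n - 1) * Real.exp (-t)

/-- The regularized lower incomplete gamma function `P(n,x) = γ(n,x)/Γ(n)`. -/
noncomputable def regP (n x : ℝ) : ℝ := (Real.Gamma n)⁻¹ * lowGamma n x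

section Aux
open Finset Nat


lemma deriv_aux (n : ℕ) (t : ℝ) :
    HasDerivAt (fun t : ℝ => -(Real.exp (-t) * ∑ j ∈ range (n+1), t ^ j / j !))
      (t ^ n * Real.exp (-t) / n !) t := by
  have h1 : HasDerivAt (fun t : ℝ => Real.exp (-t)) (-Real.exp (-t)) t := by
    exact ((hasDerivAt_neg t).exp).congr_deriv (by ring)
  have h2 : HasDerivAt (fun t : ℝ => ∑ j ∈ range (n+1), t ^ j / j !)
      (∑ j ∈ range n, t ^ j / j !) t := by
    refine (HasDerivAt.fun_sum (u := range (n+1))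
      (fun j _ => ((hasDerivAt_pow j t).div_const (j ! : ℝ)))).congr_deriv ?_
    rw [Finset.sum_range_succ' (fun j => (j * t ^ (j-1) / j ! : ℝ)) n]
    simp [Nat.factorial_succ, mul_comm, mul_div_assoc]
    rw [Finset.sum_congr rfl]
    intro j _
    field_simp
  refine (h1.mul h2).neg.congr_deriv ?_
  rw [Finset.sum_range_succ]
  field_simp
  ring

lemma lowGamma_nat (n : ℕ) (x : ℝ) :
    lowGamma ((n:ℝ)+1) x = n ! * (1 - Real.exp (-x) * ∑ j ∈ range (n+1), x ^ j / j !) := by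
  have h0 : lowGamma ((n:ℝ)+1) x = ∫ t in (0:ℝ)..x, t ^ n * Real.exp (-t) := by
    unfold lowGamma
    congr 1
    ext t
    rw [add_sub_cancel_right, Real.rpow_natCast]
  have hd : ∀ t ∈ Set.uIcc (0:ℝ) x,
      HasDerivAt (fun t : ℝ => -(Real.exp (-t) * ∑ j ∈ range (n+1), t ^ j / j !))
        (t ^ n * Real.exp (-t) / n !) t := fun t _ => deriv_aux n t
  have hi : IntervalIntegrable (fun t : ℝ => t ^ n * Real.exp (-t) / n !) volume 0 x :=
    (Continuous.div_const (by continuity) _).intervalIntegrable 0 x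
  have := intervalIntegral.integral_eq_sub_of_hasDerivAt hd hi
  have h2 : (∫ t in (0:ℝ)..x, t ^ n * Real.exp (-t)) = n ! * ∫ t in (0:ℝ)..x, t ^ n * Real.exp (-t) / n ! := by
    rw [← intervalIntegral.integral_const_mul]
    congr 1; ext t; field_simp
  rw [h0, h2, this]
  have hs : ∑ j ∈ range (n+1), (0:ℝ) ^ j / j ! = 1 := by
    rw [Finset.sum_range_succ']
    simp
  rw [hs]
  simp only [neg_zero, Real.exp_zero, mul_one]
  ring

lemma regP_nat (n : ℕ) (x : ℝ) :
    regP ((n:ℝ)+1) x = 1 - Real.exp (-x) * ∑ j ∈ range (n+1), x ^ j / j ! := by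
  rw [regP, lowGamma_nat, Real.Gamma_nat_eq_factorial]
  rw [inv_mul_cancel_left₀ (by exact_mod_cast n.factorial_ne_zero)]

lemma sum_pair (f : ℕ → ℝ) (M : ℕ) :
    ∑ j ∈ range (2*M), f j = ∑ m ∈ range M, (f (2*m) + f (2*m+1)) := by
  induction M with
  | zero => simp
  | succ M ih =>
    rw [Finset.sum_range_succ, ← ih, show 2*(M+1) = 2*M+1+1 by ring,
      Finset.sum_range_succ, Finset.sum_range_succ]
    ring

lemma telescope (lam : ℝ) (m : ℕ) :
    ∑ j ∈ range (m+1), (lam - j) * lam ^ j / j ! = lam ^ (m+1) / m ! := by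
  induction m with
  | zero => simp
  | succ m ih =>
    rw [Finset.sum_range_succ, ih, Nat.factorial_succ]
    have h1 : (m ! : ℝ) ≠ 0 := by exact_mod_cast m.factorial_ne_zero
    have h2 : ((m:ℝ) + 1) ≠ 0 := by positivity
    push_cast
    field_simp
    ring

lemma Ssum (a : ℕ → ℝ) (N : ℕ) :
    ∑ k ∈ range N, ∑ j ∈ range (2*k+2), a j
      = ∑ m ∈ range N, ((N:ℝ) - m) * (a (2*m) + a (2*m+1)) := by
  induction N with
  | zero => simp
  | succ N ih =>
    rw [Finset.sum_range_succ, ih, show 2*N+2 = 2*(N+1) by ring, sum_pair]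
    have h : ∑ m ∈ range (N+1), ((((N+1):ℕ):ℝ) - m) * (a (2*m) + a (2*m+1))
        = ∑ m ∈ range (N+1), (((N:ℝ) - m) * (a (2*m) + a (2*m+1)) + (a (2*m) + a (2*m+1))) := by
      refine Finset.sum_congr rfl fun m _ => ?_
      push_cast; ring
    rw [h, Finset.sum_add_distrib, Finset.sum_add_distrib,
      Finset.sum_range_succ (fun m => ((N:ℝ) - m) * (a (2*m) + a (2*m+1)))]
    simp
    rw [Finset.sum_add_distrib]

lemma key (M : ℕ) :
    ((M+1:ℕ):ℝ) - ∑ k ∈ range (M+1), regP (2*k+2) (2*(M+1:ℕ)) =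
      Real.exp (-(2*(M+1:ℕ):ℝ)) * (2*(M+1:ℕ):ℝ)^(2*(M+1)) * (M+1:ℕ) / (2*(M+1))!
      + (1/2) * ∑ m ∈ range (M+1),
          Real.exp (-(2*(M+1:ℕ):ℝ)) * (2*(M+1:ℕ):ℝ)^(2*m+1) / (2*m+1)! := by
  set N : ℕ := M + 1 with hNdef
  set x : ℝ := 2*((N:ℕ):ℝ) with hx
  have hre : ∀ k : ℕ, regP (2*(k:ℝ)+2) x = 1 - Real.exp (-x) * ∑ j ∈ range (2*k+2), x ^ j / j ! := by
    intro k
    have : (2*(k:ℝ)+2) = ((2*k+1:ℕ):ℝ)+1 := by push_cast; ring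
    rw [this, regP_nat]
  have h1 : ((N:ℕ):ℝ) - ∑ k ∈ range N, regP (2*k+2) x
      = Real.exp (-x) * ∑ k ∈ range N, ∑ j ∈ range (2*k+2), x ^ j / j ! := by
    rw [Finset.sum_congr rfl fun k _ => hre k, Finset.sum_sub_distrib]
    simp [Finset.mul_sum]
  have hx2 : x = 2*((N:ℕ):ℝ) := hx
  have htel : ∑ m ∈ range N, ((N:ℝ) - m) * ((x^(2*m)/(2*m)!) + (x^(2*m+1)/(2*m+1)!))
      = (1/2) * (x^(2*N) / (2*M+1)!) + (1/2) * ∑ m ∈ range N, x^(2*m+1)/(2*m+1)! := by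
    have hc : ∀ m ∈ range N, ((N:ℝ) - m) * ((x^(2*m)/(2*m)!) + (x^(2*m+1)/(2*m+1)!))
        = (1/2) * ((x - (2*m:ℕ)) * x^(2*m)/(2*m)! + (x - (2*m+1:ℕ)) * x^(2*m+1)/(2*m+1)!)
          + (1/2) * (x^(2*m+1)/(2*m+1)!) := by
      intro m _
      rw [hx2]
      push_cast
      ring
    rw [Finset.sum_congr rfl hc, Finset.sum_add_distrib, ← Finset.mul_sum, ← Finset.mul_sum,
      ← sum_pair (fun j => (x - (j:ℕ)) * x^j/j !) N]
    have : ∑ j ∈ range (2*N), (x - (j:ℕ)) * x^j/j ! = x^(2*N) / (2*M+1)! := by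
      have := telescope x (2*M+1)
      rw [show 2*M+1+1 = 2*N by omega] at this
      rw [this]
    rw [this]
  rw [h1, Ssum (fun j => x ^ j / j !) N, htel, mul_add]
  congr 1
  · rw [show (2*N)! = (2*N) * (2*M+1)! by rw [show 2*N = 2*M+1+1 by omega]; exact Nat.factorial_succ _]
    have h3 : ((2*M+1)! : ℝ) ≠ 0 := by exact_mod_cast (2*M+1).factorial_ne_zero
    have h4 : ((2*N : ℕ) : ℝ) ≠ 0 := by positivity
    have hN0 : (N : ℝ) ≠ 0 := by positivity
    push_cast
    field_simp
  · simp only [Finset.mul_sum]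
    refine Finset.sum_congr rfl fun m _ => ?_
    ring

lemma first_term (M : ℕ) :
    Real.exp (-(2*((M+1:ℕ):ℝ))) * (2*((M+1:ℕ):ℝ))^(2*(M+1)) * ((M+1:ℕ):ℝ) / (2*(M+1))!
      / Real.sqrt ((M+1:ℕ):ℝ) = 1/(2*Stirling.stirlingSeq (2*(M+1))) := by
  set N : ℕ := M + 1 with hN
  have hNpos : (0:ℝ) < (N:ℝ) := by positivity
  have hsq : Real.sqrt (2*((2*N:ℕ):ℝ)) = 2 * Real.sqrt (N:ℝ) := by
    have : 2*((2*N:ℕ):ℝ) = 2^2 * (N:ℝ) := by push_cast; ring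
    rw [this, Real.sqrt_mul (by positivity), Real.sqrt_sq (by norm_num)]
  rw [Stirling.stirlingSeq]
  rw [hsq]
  have h1 : ((2*N:ℕ):ℝ) / Real.exp 1 = 2*(N:ℝ) / Real.exp 1 := by push_cast; ring
  rw [h1, div_pow]
  have h2 : (Real.exp 1) ^ (2*N) = Real.exp (2*(N:ℝ)) := by
    rw [← Real.exp_nat_mul]; norm_num
  rw [h2]
  have h3 : Real.sqrt (N:ℝ) ≠ 0 := by positivity
  have h4 : ((2*N)! : ℝ) ≠ 0 := by exact_mod_cast (2*N).factorial_ne_zero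
  have h5 : Real.exp (2*(N:ℝ)) ≠ 0 := Real.exp_ne_zero _
  have h6 : (2*(N:ℝ))^(2*N) ≠ 0 := by positivity
  rw [Real.exp_neg]
  field_simp
  have h7 : Real.sqrt (N:ℝ) * Real.sqrt (N:ℝ) = (N:ℝ) := Real.mul_self_sqrt hNpos.le
  linear_combination (-1 : ℝ) * h7

theorem expected_number_outside_GinSE :
    Tendsto (fun N : ℕ => ((N : ℝ) - ∑ k ∈ Finset.range N, regP (2 * k + 2) (2 * N)) / Real.sqrt N)
      atTop (nhds (1 / (2 * Real.sqrt π))) := by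
  have h2N : Tendsto (fun N : ℕ => 2*N) atTop atTop :=
    Filter.tendsto_atTop_atTop.mpr fun b => ⟨b, fun n hn => by omega⟩
  have hs : Tendsto (fun N : ℕ => Stirling.stirlingSeq (2*N)) atTop (nhds (Real.sqrt π)) :=
    Stirling.tendsto_stirlingSeq_sqrt_pi.comp h2N
  have ht1 : Tendsto (fun N : ℕ => 1/(2*Stirling.stirlingSeq (2*N))) atTop
      (nhds (1/(2*Real.sqrt π))) := by
    refine Tendsto.div tendsto_const_nhds (tendsto_const_nhds.mul hs) ?_
    have : (0:ℝ) < Real.sqrt π := Real.sqrt_pos.mpr Real.pi_pos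
    positivity
  set f : ℕ → ℝ := fun N => (∑ m ∈ Finset.range N,
      Real.exp (-(2*(N:ℝ))) * (2*(N:ℝ))^(2*m+1) / (2*m+1)!) / (2*Real.sqrt N) with hf
  have hinv : Tendsto (fun N : ℕ => (Real.sqrt N)⁻¹) atTop (nhds 0) := by
    have h1 : Tendsto (fun N : ℕ => ((N:ℝ))⁻¹) atTop (nhds 0) :=
      tendsto_inv_atTop_nhds_zero_nat
    have h2 := (Real.continuous_sqrt.tendsto 0).comp h1
    simpa [Function.comp_def, Real.sqrt_inv] using h2
  have hbound : Tendsto (fun N : ℕ => 1/(2*Real.sqrt N)) atTop (nhds 0) := by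
    have : Tendsto (fun N : ℕ => (1/2 : ℝ) * (Real.sqrt N)⁻¹) atTop (nhds ((1/2 : ℝ) * 0)) :=
      tendsto_const_nhds.mul hinv
    simp only [mul_zero] at this
    refine this.congr fun N => ?_
    by_cases h : Real.sqrt N = 0
    · simp [h]
    · field_simp
  have ht2 : Tendsto f atTop (nhds 0) := by
    refine tendsto_of_tendsto_of_tendsto_of_le_of_le' tendsto_const_nhds hbound ?_ ?_
    · filter_upwards with N
      refine div_nonneg (Finset.sum_nonneg fun m _ => by positivity) (by positivity)
    · filter_upwards [eventually_ge_atTop 1] with N hN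
      have hNpos : (0:ℝ) < Real.sqrt N := Real.sqrt_pos.mpr (by exact_mod_cast hN)
      have hx0 : (0:ℝ) ≤ 2*(N:ℝ) := by positivity
      have hR : (∑ m ∈ Finset.range N,
          Real.exp (-(2*(N:ℝ))) * (2*(N:ℝ))^(2*m+1) / (2*m+1)!) ≤ 1 := by
        have h1 : ∑ m ∈ Finset.range N, (2*(N:ℝ))^(2*m+1)/(2*m+1)! ≤ Real.exp (2*(N:ℝ)) := by
          calc ∑ m ∈ Finset.range N, (2*(N:ℝ))^(2*m+1)/(2*m+1)!
              ≤ ∑ m ∈ Finset.range N,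
                ((2*(N:ℝ))^(2*m)/(2*m)! + (2*(N:ℝ))^(2*m+1)/(2*m+1)!) :=
                Finset.sum_le_sum (fun m _ => le_add_of_nonneg_left (by positivity))
            _ = ∑ j ∈ Finset.range (2*N), (2*(N:ℝ))^j/(j)! :=
                (sum_pair (fun j => (2*(N:ℝ))^j/(j)!) N).symm
            _ ≤ Real.exp (2*(N:ℝ)) := Real.sum_le_exp_of_nonneg hx0 _
        calc (∑ m ∈ Finset.range N, Real.exp (-(2*(N:ℝ))) * (2*(N:ℝ))^(2*m+1) / (2*m+1)!)
            = Real.exp (-(2*(N:ℝ))) * ∑ m ∈ Finset.range N, (2*(N:ℝ))^(2*m+1)/(2*m+1)! := by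
              rw [Finset.mul_sum]
              exact Finset.sum_congr rfl fun m _ => by ring
          _ ≤ Real.exp (-(2*(N:ℝ))) * Real.exp (2*(N:ℝ)) :=
              mul_le_mul_of_nonneg_left h1 (Real.exp_nonneg _)
          _ = 1 := by rw [← Real.exp_add]; simp
      rw [hf]
      calc (∑ m ∈ Finset.range N,
            Real.exp (-(2*(N:ℝ))) * (2*(N:ℝ))^(2*m+1) / (2*m+1)!) / (2*Real.sqrt N)
          ≤ 1 / (2*Real.sqrt N) := by gcongr
        _ = 1 / (2*Real.sqrt N) := rfl
  have hsum := ht1.add ht2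
  rw [add_zero] at hsum
  refine hsum.congr' ?_
  filter_upwards [eventually_ge_atTop 1] with N hN
  obtain ⟨M, rfl⟩ := Nat.exists_eq_succ_of_ne_zero (Nat.one_le_iff_ne_zero.mp hN)
  simp only [Nat.succ_eq_add_one]
  rw [show ((M+1:ℕ):ℝ) - ∑ k ∈ Finset.range (M+1), regP (2*k+2) (2*((M+1:ℕ):ℝ))
      = Real.exp (-(2*((M+1:ℕ):ℝ))) * (2*((M+1:ℕ):ℝ))^(2*(M+1)) * ((M+1:ℕ):ℝ) / (2*(M+1))!
        + (1/2) * ∑ m ∈ Finset.range (M+1),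
          Real.exp (-(2*((M+1:ℕ):ℝ))) * (2*((M+1:ℕ):ℝ))^(2*m+1) / (2*m+1)! from key M,
    _root_.add_div, first_term M]
  congr 1
  simp only [hf]
  ring

end Aux
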